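/- arXiv:1106.4255 — 5 statements merged into one kernel-verified Lean document; each statement's English description precedes it below -/
import Mathlib

section
/- Let p be a prime, W a finite-dimensional vector space over 𝔽_p, and G ⊆ GL(W) a subgroup containing a nontrivial scalar automorphism λ·id_W with λ ∈ 𝔽_p^×, λ ≠ 1. Then: (1) no simple 𝔽_p[G]-module is a common irreducible factor of W and End(W), and (2) H¹(G,W) = 0. -/
/-- A representation `ρ.asModule` is an `AddCommGroup` whenever `V` is. -/
noncomputable instance Representation.asModuleAddCommGroup {k G V : Type*} [CommRing k]
    [Group G] [AddCommGroup V] [Module k V] (ρ : Representation k G V) :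
    AddCommGroup ρ.asModule :=
  inferInstanceAs <| AddCommGroup V

/-- The conjugation representation of `G` on `End(V)`: `g • φ = ρ g ∘ φ ∘ ρ g⁻¹`. -/
def Representation.conjEnd {k G V : Type*} [CommRing k] [Group G] [AddCommGroup V]
    [Module k V] (ρ : Representation k G V) : Representation k G (V →ₗ[k] V) where
  toFun g :=
    { toFun := fun φ => ρ g ∘ₗ φ ∘ₗ ρ g⁻¹
      map_add' := fun φ ψ => by simp only [LinearMap.add_comp, LinearMap.comp_add]
      map_smul' := fun c φ => by
        simp only [LinearMap.smul_comp, LinearMap.comp_smul, RingHom.id_apply] }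
  map_one' := by ext φ v; simp
  map_mul' g h := by
    ext φ v
    simp [mul_inv_rev, map_mul, Module.End.mul_apply]

/-- Vanishing of the first group cohomology `H¹(G, W)` of a representation `ρ`, expressed via
inhomogeneous `1`-cocycles: every `1`-cocycle is a `1`-coboundary. -/
def H1Trivial {k G W : Type*} [CommRing k] [Group G] [AddCommGroup W] [Module k W]
    (ρ : Representation k G W) : Prop :=
  ∀ f : G → W, (∀ g h : G, f (g * h) = f g + ρ g (f h)) →
    ∃ w : W, ∀ g : G, f g = ρ g w - w

/-- Two `R`-modules have a common irreducible factor if some simple `R`-module is isomorphic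
both to a subquotient (a quotient of a submodule) of the first and to a subquotient of the
second. -/
def HasCommonIrreducibleFactor (R V W : Type*) [Ring R] [AddCommGroup V] [Module R V]
    [AddCommGroup W] [Module R W] : Prop :=
  ∃ (A : Submodule R V) (B : Submodule R A) (A' : Submodule R W) (B' : Submodule R A'),
    IsSimpleModule R (A ⧸ B) ∧ Nonempty ((A ⧸ B) ≃ₗ[R] (A' ⧸ B'))

/-- The tautological representation of a subgroup `G ⊆ GL(W)` on `W`. -/
def tautRep (p : ℕ) (W : Type) [AddCommGroup W] [Module (ZMod p) W]
    (G : Subgroup (W ≃ₗ[ZMod p] W)) : Representation (ZMod p) G W where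
  toFun g := ((g : W ≃ₗ[ZMod p] W) : W →ₗ[ZMod p] W)
  map_one' := by ext w; rfl
  map_mul' g h := by ext w; rfl


section Aux

/-- If `r • x = 0` on a module, the same holds on any subquotient. -/
lemma smul_subquot_eq_zero {R M : Type*} [Ring R] [AddCommGroup M] [Module R M]
    (r : R) (h : ∀ x : M, r • x = 0) (A : Submodule R M) (B : Submodule R A)
    (s : A ⧸ B) : r • s = 0 := by
  obtain ⟨a, rfl⟩ := Submodule.Quotient.mk_surjective B s
  have ha : r • a = 0 := by
    ext
    simpa using h (a : M)
  rw [← Submodule.Quotient.mk_smul, ha, Submodule.Quotient.mk_zero]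

/-- If some `c : R` acts as a central-unit-like element `d ≠ 1` on `V` and trivially on `V'`,
then `V` and `V'` have no common irreducible factor. -/
lemma no_common_factor_aux {R V V' : Type*} [Ring R] [AddCommGroup V] [Module R V]
    [AddCommGroup V'] [Module R V'] (c d u : R)
    (hV : ∀ x : V, (c - d) • x = 0) (hV' : ∀ x : V', (c - 1) • x = 0)
    (hu : u * (d - 1) = 1) :
    ¬ HasCommonIrreducibleFactor R V V' := by
  rintro ⟨A, B, A', B', hsimple, ⟨e⟩⟩
  have hc1 : ∀ s : (A ⧸ B), c • s = s := by
    intro s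
    apply e.injective
    rw [map_smul]
    have := smul_subquot_eq_zero _ hV' A' B' (e s)
    rw [sub_smul, one_smul, sub_eq_zero] at this
    exact this
  have hzero : ∀ s : (A ⧸ B), s = 0 := by
    intro s
    have h1 : (c - d) • s = 0 := smul_subquot_eq_zero _ hV A B s
    rw [sub_smul, hc1, sub_eq_zero] at h1
    -- h1 : s = d • s, so (d - 1) • s = 0
    have h2 : (d - 1) • s = 0 := by rw [sub_smul, one_smul, ← h1, sub_self]
    calc s = (u * (d - 1)) • s := by rw [hu, one_smul]
      _ = u • ((d - 1) • s) := mul_smul _ _ _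
      _ = 0 := by rw [h2, smul_zero]
  haveI := hsimple
  haveI := IsSimpleModule.nontrivial R (A ⧸ B)
  obtain ⟨x, hx⟩ := exists_ne (0 : A ⧸ B)
  exact hx (hzero x)

end Aux

/-- Let `p` be a prime, `W` a finite-dimensional vector space over `𝔽_p`, and
`G ⊆ GL(W)` a subgroup containing a nontrivial scalar automorphism `λ·id_W` with
`λ ∈ 𝔽_p^×, λ ≠ 1`.  Then: (1) no simple `𝔽_p[G]`-module is a common irreducible factor of
`W` and `End(W)` (the latter with the conjugation action), and (2) `H¹(G, W) = 0`. -/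
theorem no_common_factor_and_H1_trivial_of_scalar (p : ℕ) [Fact p.Prime]
    (W : Type) [AddCommGroup W] [Module (ZMod p) W] [Module.Finite (ZMod p) W]
    (G : Subgroup (W ≃ₗ[ZMod p] W))
    (hscalar : ∃ g ∈ G, ∃ lam : (ZMod p)ˣ, lam ≠ 1 ∧
      ∀ w : W, (g : W ≃ₗ[ZMod p] W) w = (lam : ZMod p) • w) :
    ¬ HasCommonIrreducibleFactor (MonoidAlgebra (ZMod p) G)
        (tautRep p W G).asModule ((tautRep p W G).conjEnd).asModule ∧
      H1Trivial (tautRep p W G) := by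
  obtain ⟨g0, hg0, lam, hlam, hact⟩ := hscalar
  set ρ := tautRep p W G with hρ
  set g0c : G := ⟨g0, hg0⟩ with hg0c
  have hlamne : (lam : ZMod p) - 1 ≠ 0 := by
    rw [sub_ne_zero]
    intro h
    exact hlam (Units.ext (by simpa using h))
  -- g0 is central in the group of linear equivalences
  have hcomm : ∀ h : G, g0c * h = h * g0c := by
    intro h
    apply Subtype.ext
    apply LinearEquiv.toLinearMap_injective
    apply LinearMap.ext
    intro w
    show (g0 : W ≃ₗ[ZMod p] W) ((h : W ≃ₗ[ZMod p] W) w)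
        = (h : W ≃ₗ[ZMod p] W) ((g0 : W ≃ₗ[ZMod p] W) w)
    rw [hact, hact, map_smul]
  -- the action of ρ g0c is scalar multiplication by lam
  have hρg0 : ∀ w : W, ρ g0c w = (lam : ZMod p) • w := fun w => hact w
  constructor
  · -- no common irreducible factor
    set c : MonoidAlgebra (ZMod p) G := MonoidAlgebra.of (ZMod p) G g0c with hc
    set d : MonoidAlgebra (ZMod p) G :=
      algebraMap (ZMod p) (MonoidAlgebra (ZMod p) G) (lam : ZMod p) with hd
    have hdW : ∀ x : ρ.asModule, (c - d) • x = 0 := by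
      intro x
      have h1 : c • x = ρ g0c x := by
        show ρ.asAlgebraHom c x = ρ g0c x
        rw [hc, Representation.asAlgebraHom_of]
      have h2 : d • x = (lam : ZMod p) • x := by
        show ρ.asAlgebraHom d x = (lam : ZMod p) • x
        rw [hd, AlgHom.commutes]
        rfl
      rw [sub_smul, h1, h2]
      exact sub_eq_zero.mpr (hρg0 x)
    have hfix : ∀ φ : W →ₗ[ZMod p] W, ρ.conjEnd g0c φ = φ := by
      intro φ
      have hinj : Function.Injective (ρ g0c) := fun a b hab => g0.injective hab
      have hinv : ∀ v : W, ρ g0c⁻¹ v = ((lam : ZMod p))⁻¹ • v := by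
        intro v
        have h3 : ρ g0c (ρ g0c⁻¹ v) = v := by
          rw [← Module.End.mul_apply, ← map_mul, mul_inv_cancel, map_one, Module.End.one_apply]
        have h4 : ρ g0c (((lam : ZMod p))⁻¹ • v) = v := by
          rw [map_smul, hρg0, smul_smul, inv_mul_cancel₀ lam.ne_zero, one_smul]
        exact hinj (h3.trans h4.symm)
      apply LinearMap.ext
      intro v
      show ρ g0c (φ (ρ g0c⁻¹ v)) = φ v
      rw [hinv, map_smul φ, map_smul, hρg0, smul_smul, inv_mul_cancel₀ lam.ne_zero, one_smul]
    have hdE : ∀ x : ρ.conjEnd.asModule, (c - 1) • x = 0 := by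
      intro x
      have h1 : c • x = ρ.conjEnd g0c x := by
        show ρ.conjEnd.asAlgebraHom c x = ρ.conjEnd g0c x
        rw [hc, Representation.asAlgebraHom_of]
      rw [sub_smul, one_smul, h1, hfix x, sub_self]
    exact no_common_factor_aux c d
      (algebraMap (ZMod p) (MonoidAlgebra (ZMod p) G) (((lam : ZMod p) - 1)⁻¹)) hdW hdE
      (by rw [hd, ← map_one (algebraMap (ZMod p) (MonoidAlgebra (ZMod p) G)), ← map_sub,
            ← map_mul, inv_mul_cancel₀ hlamne, map_one])
  · -- H¹ is trivial
    intro f hf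
    refine ⟨((lam : ZMod p) - 1)⁻¹ • f g0c, ?_⟩
    intro h
    have key : ((lam : ZMod p) - 1) • f h = ρ h (f g0c) - f g0c := by
      have h1 := hf g0c h
      have h2 := hf h g0c
      rw [hcomm h, h2, hρg0] at h1
      -- h1 : f h + ρ h (f g0c) = f g0c + lam • f h
      calc ((lam : ZMod p) - 1) • f h
          = (f g0c + (lam : ZMod p) • f h) - f h - f g0c := by
            rw [sub_smul, one_smul]; abel
        _ = (f h + ρ h (f g0c)) - f h - f g0c := by rw [← h1]
        _ = ρ h (f g0c) - f g0c := by abel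
    have : f h = ((lam : ZMod p) - 1)⁻¹ • (ρ h (f g0c) - f g0c) := by
      rw [← key, smul_smul, inv_mul_cancel₀ hlamne, one_smul]
    rw [this, smul_sub, map_smul]
end

section
/- Let p be a prime and G ⊆ GL₂(𝔽_p) a subgroup such that p does not divide |G| and the image of G in PGL₂(𝔽_p) is isomorphic, as an abstract group, to the alternating group A₄, the symmetric group S₄, or the alternating group A₅. Then G contains a nontrivial scalar matrix, i.e. G meets the center of GL₂(𝔽_p) nontrivially. -/
/-- The image of a subgroup `G ⊆ GL₂(𝔽_p)` in `PGL₂(𝔽_p)`, realized as the quotient of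
`GL₂(𝔽_p)` by its center (the subgroup of scalar matrices). -/
noncomputable def pglImage (p : ℕ) [Fact p.Prime] (G : Subgroup (GL (Fin 2) (ZMod p))) :
    Subgroup (GL (Fin 2) (ZMod p) ⧸ Subgroup.center (GL (Fin 2) (ZMod p))) :=
  G.map (QuotientGroup.mk' (Subgroup.center (GL (Fin 2) (ZMod p))))

open Matrix

variable {p : ℕ} [Fact p.Prime]

-- CH identity for 2x2
lemma sq_eq (A : Matrix (Fin 2) (Fin 2) (ZMod p)) :
    A * A = A.trace • A - A.det • (1 : Matrix (Fin 2) (Fin 2) (ZMod p)) := by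
  ext i j
  fin_cases i <;> fin_cases j <;>
    simp [Matrix.mul_apply, Fin.sum_univ_two, Matrix.trace_fin_two, Matrix.det_fin_two,
      Matrix.one_apply] <;> ring

lemma comm_identity (A B : Matrix (Fin 2) (Fin 2) (ZMod p)) :
    A * B + B * A = A.trace • B + B.trace • A + ((A*B).trace - A.trace * B.trace) •
      (1 : Matrix (Fin 2) (Fin 2) (ZMod p)) := by
  ext i j
  fin_cases i <;> fin_cases j <;>
    simp [Matrix.mul_apply, Fin.sum_univ_two, Matrix.trace_fin_two, Matrix.one_apply] <;> ring

lemma trace_eq_zero (A : Matrix (Fin 2) (Fin 2) (ZMod p)) (h : A * A = 1)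
    (hns : ∀ c : ZMod p, A ≠ c • 1) : A.trace = 0 := by
  by_contra ht
  apply hns (A.trace⁻¹ * (1 + A.det))
  have h2 := sq_eq A
  rw [h] at h2
  have : A.trace • A = (1 + A.det) • (1 : Matrix (Fin 2) (Fin 2) (ZMod p)) := by
    rw [add_smul, one_smul]; exact sub_eq_iff_eq_add.mp h2.symm
  calc A = A.trace⁻¹ • (A.trace • A) := by rw [smul_smul, inv_mul_cancel₀ ht, one_smul]
    _ = (A.trace⁻¹ * (1 + A.det)) • 1 := by rw [this, smul_smul]

lemma scalar_of_mem_center (g : GL (Fin 2) (ZMod p))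
    (hg : g ∈ Subgroup.center (GL (Fin 2) (ZMod p))) :
    ∃ c : ZMod p, (g : Matrix (Fin 2) (Fin 2) (ZMod p)) = c • 1 := by
  rw [Subgroup.mem_center_iff] at hg
  have hT1 : (!![1,1;0,1] : Matrix (Fin 2) (Fin 2) (ZMod p)) * !![1,-1;0,1] = 1 := by
    ext i j; fin_cases i <;> fin_cases j <;>
      simp [Matrix.mul_apply, Fin.sum_univ_two, Matrix.one_apply]
  have hT1' : (!![1,-1;0,1] : Matrix (Fin 2) (Fin 2) (ZMod p)) * !![1,1;0,1] = 1 := by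
    ext i j; fin_cases i <;> fin_cases j <;>
      simp [Matrix.mul_apply, Fin.sum_univ_two, Matrix.one_apply]
  have hT2 : (!![1,0;1,1] : Matrix (Fin 2) (Fin 2) (ZMod p)) * !![1,0;-1,1] = 1 := by
    ext i j; fin_cases i <;> fin_cases j <;>
      simp [Matrix.mul_apply, Fin.sum_univ_two, Matrix.one_apply]
  have hT2' : (!![1,0;-1,1] : Matrix (Fin 2) (Fin 2) (ZMod p)) * !![1,0;1,1] = 1 := by
    ext i j; fin_cases i <;> fin_cases j <;>
      simp [Matrix.mul_apply, Fin.sum_univ_two, Matrix.one_apply]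
  set T1 : GL (Fin 2) (ZMod p) := ⟨!![1,1;0,1], !![1,-1;0,1], hT1, hT1'⟩ with hT1def
  set T2 : GL (Fin 2) (ZMod p) := ⟨!![1,0;1,1], !![1,0;-1,1], hT2, hT2'⟩ with hT2def
  have e1 : (T1 : Matrix (Fin 2) (Fin 2) (ZMod p)) * g = (g : Matrix (Fin 2) (Fin 2) (ZMod p)) * T1 :=
    congrArg Units.val (hg T1)
  have e2 : (T2 : Matrix (Fin 2) (Fin 2) (ZMod p)) * g = (g : Matrix (Fin 2) (Fin 2) (ZMod p)) * T2 :=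
    congrArg Units.val (hg T2)
  set M : Matrix (Fin 2) (Fin 2) (ZMod p) := (g : Matrix (Fin 2) (Fin 2) (ZMod p)) with hM
  have a1 := congrFun (congrFun e1 0) 0
  have a2 := congrFun (congrFun e1 0) 1
  have b1 := congrFun (congrFun e2 1) 1
  simp [Matrix.mul_apply, Fin.sum_univ_two, hT1def, hT2def] at a1 a2 b1
  refine ⟨M 0 0, ?_⟩
  ext i j
  fin_cases i <;> fin_cases j <;> simp [Matrix.one_apply]
  · linear_combination b1
  · linear_combination a1
  · linear_combination a2

def KleinSpec (H : Type*) [Group H] : Prop :=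
  ∃ a b : H, a * b = b * a ∧ a ^ 2 = 1 ∧ b ^ 2 = 1 ∧ a ≠ 1 ∧ b ≠ 1 ∧ a ≠ b

lemma kleinSpec_of_iso {H K : Type*} [Group H] [Group K] (e : H ≃* K) (h : KleinSpec H) :
    KleinSpec K := by
  obtain ⟨a, b, hc, ha2, hb2, ha1, hb1, hab⟩ := h
  refine ⟨e a, e b, ?_, ?_, ?_, ?_, ?_, ?_⟩
  · rw [← _root_.map_mul, ← _root_.map_mul, hc]
  · rw [← map_pow, ha2, _root_.map_one]
  · rw [← map_pow, hb2, _root_.map_one]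
  · simpa using e.injective.ne_iff.mpr ha1
  · simpa using e.injective.ne_iff.mpr hb1
  · exact e.injective.ne_iff.mpr hab

lemma klein_S4 : KleinSpec (Equiv.Perm (Fin 4)) :=
  ⟨Equiv.swap 0 1 * Equiv.swap 2 3, Equiv.swap 0 2 * Equiv.swap 1 3, by decide, by decide,
    by decide, by decide, by decide, by decide⟩

lemma klein_A4 : KleinSpec (alternatingGroup (Fin 4)) :=
  ⟨⟨Equiv.swap 0 1 * Equiv.swap 2 3, Equiv.Perm.mem_alternatingGroup.mpr (by decide)⟩, ⟨Equiv.swap 0 2 * Equiv.swap 1 3, Equiv.Perm.mem_alternatingGroup.mpr (by decide)⟩,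
    by ext1; decide, by ext1; decide, by ext1; decide,
    by simp [Subtype.ext_iff]; decide, by simp [Subtype.ext_iff]; decide,
    by simp [Subtype.ext_iff]; decide⟩

lemma klein_A5 : KleinSpec (alternatingGroup (Fin 5)) :=
  ⟨⟨Equiv.swap 0 1 * Equiv.swap 2 3, Equiv.Perm.mem_alternatingGroup.mpr (by decide)⟩, ⟨Equiv.swap 0 2 * Equiv.swap 1 3, Equiv.Perm.mem_alternatingGroup.mpr (by decide)⟩,
    by ext1; decide, by ext1; decide, by ext1; decide,
    by simp [Subtype.ext_iff]; decide, by simp [Subtype.ext_iff]; decide,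
    by simp [Subtype.ext_iff]; decide⟩

theorem aux (p : ℕ) [Fact p.Prime] (G : Subgroup (GL (Fin 2) (ZMod p)))
    (hcard : ¬ p ∣ Nat.card G) (hk : KleinSpec (pglImage p G)) :
    ∃ g ∈ G, g ≠ 1 ∧ ∃ c : ZMod p,
      ((g : GL (Fin 2) (ZMod p)) : Matrix (Fin 2) (Fin 2) (ZMod p)) =
        c • (1 : Matrix (Fin 2) (Fin 2) (ZMod p)) := by
  by_contra hcon
  push_neg at hcon
  set Z := Subgroup.center (GL (Fin 2) (ZMod p)) with hZ
  set φ : G →* (GL (Fin 2) (ZMod p) ⧸ Z) := (QuotientGroup.mk' Z).comp G.subtype with hφ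
  have hφinj : Function.Injective φ := by
    rw [injective_iff_map_eq_one]
    intro a ha
    have hmem : (a : GL (Fin 2) (ZMod p)) ∈ Z := (QuotientGroup.eq_one_iff _).mp ha
    obtain ⟨c, hc⟩ := scalar_of_mem_center (a : GL (Fin 2) (ZMod p)) hmem
    by_contra hne
    exact hcon (a : GL (Fin 2) (ZMod p)) a.2 (fun h => hne (Subtype.ext h)) c hc
  have hrange : ∀ x, x ∈ pglImage p G ↔ ∃ y : G, φ y = x := by
    intro x
    constructor
    · rintro ⟨g, hg, rfl⟩; exact ⟨⟨g, hg⟩, rfl⟩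
    · rintro ⟨y, rfl⟩; exact ⟨y, y.2, rfl⟩
  obtain ⟨a, b, hc, ha2, hb2, ha1, hb1, hab⟩ := hk
  obtain ⟨a', ha'⟩ := (hrange a).mp a.2
  obtain ⟨b', hb'⟩ := (hrange b).mp b.2
  have hc' : a' * b' = b' * a' := by
    apply hφinj
    rw [_root_.map_mul, _root_.map_mul, ha', hb']
    exact_mod_cast congrArg Subtype.val hc
  have ha2' : a' ^ 2 = 1 := by
    apply hφinj
    rw [map_pow, ha', _root_.map_one]
    exact_mod_cast congrArg Subtype.val ha2
  have hb2' : b' ^ 2 = 1 := by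
    apply hφinj
    rw [map_pow, hb', _root_.map_one]
    exact_mod_cast congrArg Subtype.val hb2
  have ha1' : a' ≠ 1 := by
    intro h
    apply ha1
    apply Subtype.ext
    rw [← ha', h, _root_.map_one]; rfl
  have hb1' : b' ≠ 1 := by
    intro h
    apply hb1
    apply Subtype.ext
    rw [← hb', h, _root_.map_one]; rfl
  have hab' : a' ≠ b' := by
    intro h
    apply hab
    apply Subtype.ext
    rw [← ha', ← hb', h]
  -- p is odd
  have hord : orderOf a' = 2 := orderOf_eq_prime ha2' ha1'
  have h2dvd : 2 ∣ Nat.card G := by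
    have := orderOf_dvd_natCard a'
    rwa [hord] at this
  have hp2 : p ≠ 2 := fun h => hcard (h ▸ h2dvd)
  have h2ne : (2 : ZMod p) ≠ 0 := by
    intro h
    have : ((2 : ℕ) : ZMod p) = 0 := by exact_mod_cast h
    rw [ZMod.natCast_eq_zero_iff] at this
    exact hp2 ((Nat.prime_dvd_prime_iff_eq (Fact.out) Nat.prime_two).mp this)
  -- pass to matrices
  set A : Matrix (Fin 2) (Fin 2) (ZMod p) := ((a' : GL (Fin 2) (ZMod p)) : Matrix (Fin 2) (Fin 2) (ZMod p)) with hA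
  set B : Matrix (Fin 2) (Fin 2) (ZMod p) := ((b' : GL (Fin 2) (ZMod p)) : Matrix (Fin 2) (Fin 2) (ZMod p)) with hB
  have hAA : A * A = 1 := by
    have := congrArg (fun x : G => ((x : GL (Fin 2) (ZMod p)) : Matrix (Fin 2) (Fin 2) (ZMod p))) ha2'
    simpa [sq] using this
  have hBB : B * B = 1 := by
    have := congrArg (fun x : G => ((x : GL (Fin 2) (ZMod p)) : Matrix (Fin 2) (Fin 2) (ZMod p))) hb2'
    simpa [sq] using this
  have hABc : A * B = B * A := by
    have := congrArg (fun x : G => ((x : GL (Fin 2) (ZMod p)) : Matrix (Fin 2) (Fin 2) (ZMod p))) hc'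
    simpa using this
  have hAns : ∀ c : ZMod p, A ≠ c • 1 :=
    fun c => hcon (a' : GL (Fin 2) (ZMod p)) a'.2 (fun h => ha1' (Subtype.ext h)) c
  have hBns : ∀ c : ZMod p, B ≠ c • 1 :=
    fun c => hcon (b' : GL (Fin 2) (ZMod p)) b'.2 (fun h => hb1' (Subtype.ext h)) c
  have hab2' : (a' * b') ^ 2 = 1 := by
    rw [(show Commute a' b' from hc').mul_pow, ha2', hb2', one_mul]
  have hab1' : a' * b' ≠ 1 := by
    intro h
    apply hab'
    have hbinv : b'⁻¹ = b' := by
      rw [← mul_eq_one_iff_inv_eq]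
      rw [← sq]; exact hb2'
    rw [← hbinv]
    exact mul_eq_one_iff_eq_inv.mp h
  have hCC : (A * B) * (A * B) = 1 := by
    have := congrArg (fun x : G => ((x : GL (Fin 2) (ZMod p)) : Matrix (Fin 2) (Fin 2) (ZMod p))) hab2'
    simpa [sq] using this
  have hCns : ∀ c : ZMod p, A * B ≠ c • 1 := by
    intro c h
    have hmem := hcon ((a' * b' : G) : GL (Fin 2) (ZMod p)) (a' * b').2
      (fun hh => hab1' (Subtype.ext hh)) c
    apply hmem
    simpa using h
  have htrA := trace_eq_zero A hAA hAns
  have htrB := trace_eq_zero B hBB hBns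
  have htrC := trace_eq_zero (A * B) hCC hCns
  have hsum : A * B + A * B = 0 := by
    have k := comm_identity A B
    rw [htrA, htrB, htrC] at k
    simp at k
    rwa [← hABc] at k
  have h110 : (1 : Matrix (Fin 2) (Fin 2) (ZMod p)) + 1 = 0 := by
    calc (1 : Matrix (Fin 2) (Fin 2) (ZMod p)) + 1
        = (A * B) * (A * B) + (A * B) * (A * B) := by rw [hCC]
      _ = (A * B + A * B) * (A * B) := (add_mul _ _ _).symm
      _ = 0 * (A * B) := by rw [hsum]
      _ = 0 := zero_mul _
  have hent := congrFun (congrFun h110 0) 0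
  simp [Matrix.one_apply] at hent
  exact h2ne (by rw [← one_add_one_eq_two]; exact hent)

/-- Let `p` be a prime and `G ⊆ GL₂(𝔽_p)` a subgroup such that `p` does not
divide `|G|` and the image of `G` in `PGL₂(𝔽_p)` is isomorphic, as an abstract group, to `A₄`,
`S₄` or `A₅`.  Then `G` contains a nontrivial scalar matrix, i.e. `G` meets the center of
`GL₂(𝔽_p)` nontrivially. -/
theorem exceptional_subgroup_meets_center (p : ℕ) [Fact p.Prime]
    (G : Subgroup (GL (Fin 2) (ZMod p))) (hcard : ¬ p ∣ Nat.card G)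
    (hiso : Nonempty (pglImage p G ≃* alternatingGroup (Fin 4)) ∨
      Nonempty (pglImage p G ≃* Equiv.Perm (Fin 4)) ∨
      Nonempty (pglImage p G ≃* alternatingGroup (Fin 5))) :
    ∃ g ∈ G, g ≠ 1 ∧ ∃ c : ZMod p,
      ((g : GL (Fin 2) (ZMod p)) : Matrix (Fin 2) (Fin 2) (ZMod p)) =
        c • (1 : Matrix (Fin 2) (Fin 2) (ZMod p)) := by
  rcases hiso with ⟨⟨e⟩⟩ | ⟨⟨e⟩⟩ | ⟨⟨e⟩⟩
  · exact aux p G hcard (kleinSpec_of_iso e.symm klein_A4)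
  · exact aux p G hcard (kleinSpec_of_iso e.symm klein_S4)
  · exact aux p G hcard (kleinSpec_of_iso e.symm klein_A5)
end

section
/- Let p be a prime and ρ : S₃ → GL₂(𝔽_p) an injective group homomorphism. Then for every σ ∈ S₃ the determinant of ρ(σ) equals the image of the sign sign(σ) ∈ {±1} under the natural map {±1} → 𝔽_p^×. -/
lemma zmod2_key : ∀ x : ZMod 2, x ≠ 0 → x = 1 := by decide

lemma zmod2_neg : (1 : ZMod 2) = -1 := by decide

lemma aux_invol {p : ℕ} [Fact p.Prime] (h2 : (2 : ZMod p) ≠ 0)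
    (A : Matrix (Fin 2) (Fin 2) (ZMod p)) (hA : A * A = 1) (hdet : A.det = 1) :
    A = 1 ∨ A = -1 := by
  have e00 := congrFun (congrFun hA 0) 0
  have e01 := congrFun (congrFun hA 0) 1
  have e10 := congrFun (congrFun hA 1) 0
  have e11 := congrFun (congrFun hA 1) 1
  simp [Matrix.mul_apply, Fin.sum_univ_two, Matrix.one_apply] at e00 e01 e10 e11
  rw [Matrix.det_fin_two] at hdet
  set a := A 0 0 with ha
  set b := A 0 1 with hb
  set c := A 1 0 with hc
  set d := A 1 1 with hd
  have hs : a * (a + d) = 2 := by linear_combination e00 + hdet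
  have hs' : d * (a + d) = 2 := by linear_combination e11 + hdet
  have hbs : b * (a + d) = 0 := by linear_combination e01
  have hcs : c * (a + d) = 0 := by linear_combination e10
  have hsne : (a + d) ≠ 0 := by
    intro h; rw [h, mul_zero] at hs; exact h2 hs.symm
  have hb0 : b = 0 := (mul_eq_zero.1 hbs).resolve_right hsne
  have hc0 : c = 0 := (mul_eq_zero.1 hcs).resolve_right hsne
  have had : a = d := mul_right_cancel₀ hsne (hs.trans hs'.symm)
  rw [← had] at hs
  have h2a : (2 : ZMod p) * ((a - 1) * (a + 1)) = 0 := by linear_combination hs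
  rcases mul_eq_zero.1 h2a with h | h
  · exact absurd h h2
  rcases mul_eq_zero.1 h with h | h
  · left
    have ha1 : a = 1 := by linear_combination h
    ext i j
    fin_cases i <;> fin_cases j <;>
      simp [Matrix.one_apply, ← ha, ← hb, ← hc, ← hd, ha1, hb0, hc0, ← had]
  · right
    have ha1 : a = -1 := by linear_combination h
    ext i j
    fin_cases i <;> fin_cases j <;>
      simp [Matrix.one_apply, ← ha, ← hb, ← hc, ← hd, ha1, hb0, hc0, ← had]

/-- Let `p` be a prime and `ρ : S₃ → GL₂(𝔽_p)` an injective group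
homomorphism.  Then for every `σ ∈ S₃` the determinant of `ρ σ` equals the image of the sign
`sign σ ∈ {±1}` under the natural map `{±1} → 𝔽_p^×`. -/
theorem det_of_faithful_S3_rep_eq_sign (p : ℕ) [Fact p.Prime]
    (ρ : Equiv.Perm (Fin 3) →* GL (Fin 2) (ZMod p)) (hρ : Function.Injective ρ) :
    ∀ σ : Equiv.Perm (Fin 3),
      ((ρ σ : GL (Fin 2) (ZMod p)) : Matrix (Fin 2) (Fin 2) (ZMod p)).det =
        ((Equiv.Perm.sign σ : ℤ) : ZMod p) := by
  -- value of φ(σ) := det (ρ σ) as a product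
  have hmul : ∀ σ τ : Equiv.Perm (Fin 3),
      ((ρ (σ * τ) : GL (Fin 2) (ZMod p)) : Matrix (Fin 2) (Fin 2) (ZMod p)).det =
      ((ρ σ : GL (Fin 2) (ZMod p)) : Matrix (Fin 2) (Fin 2) (ZMod p)).det *
      ((ρ τ : GL (Fin 2) (ZMod p)) : Matrix (Fin 2) (Fin 2) (ZMod p)).det := by
    intro σ τ
    rw [map_mul]
    simp [Matrix.det_mul]
  have hone : ((ρ 1 : GL (Fin 2) (ZMod p)) : Matrix (Fin 2) (Fin 2) (ZMod p)).det = 1 := by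
    rw [map_one]; simp
  by_cases h2 : (2 : ZMod p) = 0
  -- characteristic 2 case: p = 2
  · have hp : p = 2 := by
      have hdvd : p ∣ 2 :=
        (ZMod.natCast_eq_zero_iff 2 p).1 (by exact_mod_cast h2)
      exact (Nat.prime_dvd_prime_iff_eq Fact.out Nat.prime_two).1 hdvd
    subst hp
    intro σ
    have hunit : IsUnit ((ρ σ : GL (Fin 2) (ZMod 2)) : Matrix (Fin 2) (Fin 2) (ZMod 2)).det :=
      Matrix.isUnit_iff_isUnit_det _ |>.1 (ρ σ).isUnit
    have h1 : ((ρ σ : GL (Fin 2) (ZMod 2)) : Matrix (Fin 2) (Fin 2) (ZMod 2)).det = 1 := by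
      apply zmod2_key
      intro h; rw [h] at hunit; simp at hunit
    rw [h1]
    rcases Int.units_eq_one_or (Equiv.Perm.sign σ) with h | h
    · rw [h]; simp
    · rw [h]
      have : ((-1 : ℤˣ) : ℤ) = -1 := rfl
      rw [this]
      push_cast
      exact zmod2_neg
  -- main case
  · -- every transposition has determinant -1
    have htr : ∀ τ : Equiv.Perm (Fin 3), τ * τ = 1 → τ ≠ 1 →
        (∃ σ, τ * σ ≠ σ * τ) →
        ((ρ τ : GL (Fin 2) (ZMod p)) : Matrix (Fin 2) (Fin 2) (ZMod p)).det = -1 := by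
      intro τ hτ2 hτ1 hτc
      set A := ((ρ τ : GL (Fin 2) (ZMod p)) : Matrix (Fin 2) (Fin 2) (ZMod p)) with hAdef
      have hA2 : A * A = 1 := by
        rw [hAdef, ← Units.val_mul, ← map_mul, hτ2, map_one]; rfl
      have hd2 : A.det * A.det = 1 := by
        rw [← Matrix.det_mul, hA2, Matrix.det_one]
      have hd2' : (A.det - 1) * (A.det + 1) = 0 := by linear_combination hd2
      rcases mul_eq_zero.1 hd2' with h | h
      · -- det = 1 : get contradiction
        exfalso
        have hdet1 : A.det = 1 := by linear_combination h
        rcases aux_invol h2 A hA2 hdet1 with hA | hA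
        · apply hτ1
          apply hρ
          rw [map_one]
          exact Units.ext hA
        · obtain ⟨σ, hσ⟩ := hτc
          apply hσ
          apply hρ
          apply Units.ext
          have : (((ρ (τ * σ)) : GL (Fin 2) (ZMod p)) : Matrix (Fin 2) (Fin 2) (ZMod p)) =
              A * ((ρ σ : GL (Fin 2) (ZMod p)) : Matrix (Fin 2) (Fin 2) (ZMod p)) := by
            rw [map_mul]; rfl
          have h2' : (((ρ (σ * τ)) : GL (Fin 2) (ZMod p)) : Matrix (Fin 2) (Fin 2) (ZMod p)) =
              ((ρ σ : GL (Fin 2) (ZMod p)) : Matrix (Fin 2) (Fin 2) (ZMod p)) * A := by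
            rw [map_mul]; rfl
          rw [this, h2', hA]
          simp
      · linear_combination h
    have h01 : ((ρ (Equiv.swap (0:Fin 3) 1) : GL (Fin 2) (ZMod p)) :
        Matrix (Fin 2) (Fin 2) (ZMod p)).det = -1 :=
      htr _ (by decide) (by decide) ⟨Equiv.swap 0 2, by decide⟩
    have h02 : ((ρ (Equiv.swap (0:Fin 3) 2) : GL (Fin 2) (ZMod p)) :
        Matrix (Fin 2) (Fin 2) (ZMod p)).det = -1 :=
      htr _ (by decide) (by decide) ⟨Equiv.swap 0 1, by decide⟩
    have h12 : ((ρ (Equiv.swap (1:Fin 3) 2) : GL (Fin 2) (ZMod p)) :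
        Matrix (Fin 2) (Fin 2) (ZMod p)).det = -1 :=
      htr _ (by decide) (by decide) ⟨Equiv.swap 0 1, by decide⟩
    have hcases : ∀ σ : Equiv.Perm (Fin 3), σ = 1 ∨ σ = Equiv.swap 0 1 ∨ σ = Equiv.swap 0 2 ∨
        σ = Equiv.swap 1 2 ∨ σ = Equiv.swap 0 1 * Equiv.swap 0 2 ∨
        σ = Equiv.swap 0 1 * Equiv.swap 1 2 := by decide
    intro σ
    rcases hcases σ with h | h | h | h | h | h <;> subst h
    · rw [hone]; simp
    · rw [h01, show Equiv.Perm.sign (Equiv.swap (0:Fin 3) 1) = -1 from by decide]; simp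
    · rw [h02, show Equiv.Perm.sign (Equiv.swap (0:Fin 3) 2) = -1 from by decide]; simp
    · rw [h12, show Equiv.Perm.sign (Equiv.swap (1:Fin 3) 2) = -1 from by decide]; simp
    · rw [hmul, h01, h02,
        show Equiv.Perm.sign (Equiv.swap (0:Fin 3) 1 * Equiv.swap 0 2) = 1 from by decide]
      norm_num
    · rw [hmul, h01, h12,
        show Equiv.Perm.sign (Equiv.swap (0:Fin 3) 1 * Equiv.swap 1 2) = 1 from by decide]
      norm_num
end

section
/- Let p be a prime and M ∈ GL₂(ℚ_p) a matrix with M^p = 1 and M ≠ 1. Then p ≤ 3. -/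
open Polynomial

theorem aux_no_small_factor (p : ℕ) [hp : Fact p.Prime] (hp4 : 4 ≤ p)
    (q : ℚ_[p][X]) (hqm : q.Monic) (hq1 : 1 ≤ q.natDegree) (hq2 : q.natDegree ≤ 2)
    (hqdvd : q ∣ ∑ i ∈ Finset.range p, (X : ℚ_[p][X]) ^ i) : False := by
  have hpne : (p : ℚ_[p]) ≠ 0 := Nat.cast_ne_zero.mpr hp.out.ne_zero
  have hinj := IsFractionRing.injective ℤ_[p] ℚ_[p]
  set Φ : ℚ_[p][X] := ∑ i ∈ Finset.range p, X ^ i with hΦdef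
  set ΦZ : ℤ_[p][X] := ∑ i ∈ Finset.range p, X ^ i with hΦZdef
  have hmapΦ : ΦZ.map (algebraMap ℤ_[p] ℚ_[p]) = Φ := by
    simp [hΦdef, hΦZdef, Polynomial.map_sum]
  have hXpZ : (X ^ p - 1 : ℤ_[p][X]) = ΦZ * (X - 1) := (geom_sum_mul X p).symm
  have hXpQ : (X ^ p - 1 : ℚ_[p][X]) = Φ * (X - 1) := (geom_sum_mul X p).symm
  have hXpm : (X ^ p - 1 : ℤ_[p][X]).Monic := by
    simpa using monic_X_pow_sub_C (1 : ℤ_[p]) hp.out.ne_zero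
  have hXpmap : (X ^ p - 1 : ℤ_[p][X]).map (algebraMap ℤ_[p] ℚ_[p]) = X ^ p - 1 := by
    simp
  have hqdvd' : q ∣ (X ^ p - 1 : ℚ_[p][X]) := hqdvd.trans ⟨X - 1, hXpQ⟩
  have hΦev : Φ.eval 1 = (p : ℚ_[p]) := by simp [hΦdef, eval_geom_sum]
  have hΦne : Φ ≠ 0 := fun h0 => hpne (by rw [← hΦev, h0, eval_zero])
  have hX1 : (X - 1 : ℚ_[p][X]) ≠ 0 := by
    simpa using X_sub_C_ne_zero (1 : ℚ_[p])
  have hΦm : Φ.Monic := by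
    have : (Φ * (X - 1)).Monic := by
      rw [← hXpQ]; simpa using monic_X_pow_sub_C (1 : ℚ_[p]) hp.out.ne_zero
    have hm1 : (X - 1 : ℚ_[p][X]).Monic := by simpa using monic_X_sub_C (1 : ℚ_[p])
    exact hm1.of_mul_monic_right this
  obtain ⟨h, hΦqh⟩ := hqdvd
  have hhm : h.Monic := hqm.of_mul_monic_left (hΦqh ▸ hΦm)
  have hΦdeg : Φ.natDegree + 1 = p := by
    have h1 := congrArg natDegree hXpQ
    rw [natDegree_mul hΦne hX1] at h1
    have h2 : (X - 1 : ℚ_[p][X]).natDegree = 1 := by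
      simpa using natDegree_X_sub_C (1 : ℚ_[p])
    have h3 : (X ^ p - 1 : ℚ_[p][X]).natDegree = p := by
      rw [show ((1:ℚ_[p][X]) = C 1) by simp]
      exact natDegree_X_pow_sub_C
    omega
  have hΦdegmul : Φ.natDegree = q.natDegree + h.natDegree := by
    have := congrArg natDegree hΦqh
    rwa [natDegree_mul hqm.ne_zero hhm.ne_zero] at this
  have hhdeg : 1 ≤ h.natDegree := by omega
  -- descend to ℤ_[p]
  obtain ⟨q₀, hq₀⟩ := IsIntegrallyClosed.eq_map_mul_C_of_dvd (K := ℚ_[p]) hXpm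
    (hXpmap ▸ hqdvd')
  rw [hqm.leadingCoeff, map_one, mul_one] at hq₀
  have hhdvd : h ∣ (X ^ p - 1 : ℚ_[p][X]) :=
    (Dvd.intro_left q hΦqh.symm).trans ⟨X - 1, hXpQ⟩
  obtain ⟨h₀, hh₀⟩ := IsIntegrallyClosed.eq_map_mul_C_of_dvd (K := ℚ_[p]) hXpm
    (hXpmap ▸ hhdvd)
  rw [hhm.leadingCoeff, map_one, mul_one] at hh₀
  have hq₀m : q₀.Monic := monic_of_injective hinj (hq₀ ▸ hqm)
  have hh₀m : h₀.Monic := monic_of_injective hinj (hh₀ ▸ hhm)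
  have hq₀deg : q₀.natDegree = q.natDegree := by
    rw [← hq₀]; exact (hq₀m.natDegree_map _).symm
  have hh₀deg : h₀.natDegree = h.natDegree := by
    rw [← hh₀]; exact (hh₀m.natDegree_map _).symm
  have hfact : ΦZ = q₀ * h₀ := by
    apply Polynomial.map_injective _ hinj
    rw [Polynomial.map_mul, hq₀, hh₀, hmapΦ, hΦqh]
  -- evaluate at 1
  have hev1 : q₀.eval 1 * h₀.eval 1 = (p : ℤ_[p]) := by
    have := congrArg (Polynomial.eval (1 : ℤ_[p])) hfact
    simpa [hΦZdef, eval_geom_sum] using this.symm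
  -- reduce mod p
  have key : ∀ g : ℤ_[p][X], g.Monic → 1 ≤ g.natDegree →
      (g.map (PadicInt.toZMod (p := p))) ∣ (X - 1 : (ZMod p)[X]) ^ p →
      (p : ℤ_[p]) ∣ g.eval 1 := by
    intro g hgm hgdeg hgdvd
    have hgbm : (g.map (PadicInt.toZMod (p := p))).Monic := hgm.map _
    obtain ⟨i, hip, hassoc⟩ := (dvd_prime_pow (by
      simpa using prime_X_sub_C (1 : ZMod p)) p).mp hgdvd
    have hi1 : 1 ≤ i := by
      by_contra hi
      have : i = 0 := by omega
      subst this
      simp only [pow_zero] at hassoc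
      have hun := associated_one_iff_isUnit.mp hassoc
      have hdeg := hgm.natDegree_map (PadicInt.toZMod (p := p))
      obtain ⟨r, -, hr⟩ := Polynomial.isUnit_iff.mp hun
      rw [← hr] at hdeg
      simp [natDegree_C] at hdeg
      omega
    obtain ⟨u, hu⟩ := hassoc
    have hev : (g.map (PadicInt.toZMod (p := p))).eval 1 = 0 := by
      have h1 := congrArg (Polynomial.eval (1 : ZMod p)) hu
      have hz : ((X - 1 : (ZMod p)[X]) ^ i).eval 1 = 0 := by
        simp [zero_pow (by omega : i ≠ 0)]
      rw [eval_mul, hz] at h1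
      rcases Polynomial.isUnit_iff.mp u.isUnit with ⟨r, hru, hrC⟩
      have : ((u : (ZMod p)[X])).eval 1 = r := by rw [← hrC]; simp
      rw [this] at h1
      exact (mul_eq_zero.mp h1).resolve_right hru.ne_zero
    have : PadicInt.toZMod (g.eval 1) = 0 := by
      rw [← eval₂_at_one, ← eval_map, hev]
    have hmem : g.eval 1 ∈ RingHom.ker (PadicInt.toZMod (p := p)) := this
    rw [PadicInt.ker_toZMod, PadicInt.maximalIdeal_eq_span_p,
      Ideal.mem_span_singleton] at hmem
    exact hmem
  -- the two divisibilities
  have hmapfact : (q₀.map (PadicInt.toZMod (p := p))) * (h₀.map (PadicInt.toZMod (p := p)))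
      * ((X : (ZMod p)[X]) - 1) = (X - 1 : (ZMod p)[X]) ^ p := by
    have := congrArg (Polynomial.map (PadicInt.toZMod (p := p))) hXpZ
    rw [hfact] at this
    have hchar : (X - 1 : (ZMod p)[X]) ^ p = X ^ p - 1 := by
      have := sub_pow_char (R := (ZMod p)[X]) (p := p) (x := X) (y := 1)
      simpa using this
    rw [hchar]
    simpa [Polynomial.map_mul] using this.symm
  have hqdvdbar : (q₀.map (PadicInt.toZMod (p := p))) ∣ (X - 1 : (ZMod p)[X]) ^ p :=
    ⟨(h₀.map (PadicInt.toZMod (p := p))) * ((X : (ZMod p)[X]) - 1), by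
      rw [← hmapfact]; ring⟩
  have hhdvdbar : (h₀.map (PadicInt.toZMod (p := p))) ∣ (X - 1 : (ZMod p)[X]) ^ p :=
    ⟨(q₀.map (PadicInt.toZMod (p := p))) * ((X : (ZMod p)[X]) - 1), by
      rw [← hmapfact]; ring⟩
  have hd1 : (p : ℤ_[p]) ∣ q₀.eval 1 := key q₀ hq₀m (by omega) hqdvdbar
  have hd2 : (p : ℤ_[p]) ∣ h₀.eval 1 := key h₀ hh₀m (by omega) hhdvdbar
  have hdd : (p : ℤ_[p]) * p ∣ (p : ℤ_[p]) := by
    have := mul_dvd_mul hd1 hd2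
    rwa [hev1] at this
  obtain ⟨c, hc⟩ := hdd
  have hpZne : (p : ℤ_[p]) ≠ 0 := Nat.cast_ne_zero.mpr hp.out.ne_zero
  have h1 : (1 : ℤ_[p]) = p * c := by
    apply mul_left_cancel₀ hpZne
    rw [mul_one, ← mul_assoc]; exact hc
  have hunit : IsUnit (p : ℤ_[p]) := IsUnit.of_mul_eq_one c h1.symm
  have := PadicInt.isUnit_iff.mp hunit
  rw [PadicInt.norm_p] at this
  have h2 : (p : ℝ) = 1 := inv_eq_one.mp this
  have : p = 1 := by exact_mod_cast h2
  omega

/-- Let `p` be a prime and `M ∈ GL₂(ℚ_p)` a matrix with `M ^ p = 1` and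
`M ≠ 1`. Then `p ≤ 3`. -/
theorem order_p_element_GL2_Qp_implies_p_le_three (p : ℕ) [Fact p.Prime]
    (M : GL (Fin 2) ℚ_[p]) (hMp : M ^ p = 1) (hM : M ≠ 1) :
    p ≤ 3 := by
  by_contra hcon
  have hp4 : 4 ≤ p := by omega
  classical
  set A : Matrix (Fin 2) (Fin 2) ℚ_[p] := (M : Matrix (Fin 2) (Fin 2) ℚ_[p]) with hA
  have hAp : A ^ p = 1 := by
    have := congrArg Units.val hMp
    simpa [Units.val_pow_eq_pow_val] using this
  have hA1 : A ≠ 1 := fun h => hM (Units.ext h)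
  have hint : IsIntegral ℚ_[p] A := Algebra.IsIntegral.isIntegral A
  set f := minpoly ℚ_[p] A with hf
  have hfm : f.Monic := minpoly.monic hint
  have hfdvd : f ∣ (X ^ p - 1 : ℚ_[p][X]) := minpoly.dvd _ _ (by simp [hAp])
  have hfdeg : f.natDegree ≤ 2 := by
    have h1 := Matrix.minpoly_dvd_charpoly A
    have h2 : (Matrix.charpoly A).natDegree = 2 := by
      simpa using A.charpoly_natDegree_eq_dim
    calc f.natDegree ≤ (Matrix.charpoly A).natDegree :=
        Polynomial.natDegree_le_of_dvd h1 (A.charpoly_monic).ne_zero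
      _ = 2 := h2
  have hfpos : 0 < f.natDegree := minpoly.natDegree_pos hint
  have hfne : f ≠ X - 1 := by
    intro h
    apply hA1
    have := minpoly.aeval ℚ_[p] A
    rw [← hf, h] at this
    simpa [sub_eq_zero] using this
  set Φ : ℚ_[p][X] := ∑ i ∈ Finset.range p, X ^ i with hΦdef
  have hXpQ : (X ^ p - 1 : ℚ_[p][X]) = Φ * (X - 1) := (geom_sum_mul X p).symm
  set g := EuclideanDomain.gcd f Φ with hg
  by_cases hgu : IsUnit g
  · -- coprime case : f ∣ X - 1, so f = X - 1, contradiction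
    have hcop : IsCoprime f Φ := EuclideanDomain.gcd_isUnit_iff.mp hgu
    have hfd : f ∣ Φ * (X - 1) := hXpQ ▸ hfdvd
    have hfX1 : f ∣ (X - 1 : ℚ_[p][X]) := hcop.dvd_of_dvd_mul_left hfd
    obtain ⟨c, hc⟩ := hfX1
    have hX1ne : (X - 1 : ℚ_[p][X]) ≠ 0 := by
      simpa using X_sub_C_ne_zero (1 : ℚ_[p])
    have hcne : c ≠ 0 := fun h0 => hX1ne (by rw [hc, h0, mul_zero])
    have hXdeg : (X - 1 : ℚ_[p][X]).natDegree = 1 := by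
      simpa using natDegree_X_sub_C (1 : ℚ_[p])
    have hdeg : (1 : ℕ) = f.natDegree + c.natDegree := by
      have := congrArg natDegree hc
      rw [natDegree_mul hfm.ne_zero hcne, hXdeg] at this
      exact this
    have hcdeg : c.natDegree = 0 := by omega
    have hcC : c = C (c.coeff 0) := eq_C_of_natDegree_eq_zero hcdeg
    have hlc : (1 : ℚ_[p]) = c.coeff 0 := by
      have := congrArg leadingCoeff hc
      have hXm : (X - 1 : ℚ_[p][X]).Monic := by simpa using monic_X_sub_C (1 : ℚ_[p])
      rw [leadingCoeff_mul, hfm.leadingCoeff, one_mul, hXm.leadingCoeff] at this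
      rw [hcC] at this ⊢
      simpa using this
    apply hfne
    rw [hc, hcC, ← hlc, map_one, mul_one]
  · -- g is a nontrivial common factor
    have hfne0 : f ≠ 0 := hfm.ne_zero
    have hgne : g ≠ 0 := fun h0 => by
      have := EuclideanDomain.gcd_dvd_left f Φ
      rw [← hg, h0] at this
      exact hfne0 (zero_dvd_iff.mp this)
    have hlcne : g.leadingCoeff ≠ 0 := leadingCoeff_ne_zero.mpr hgne
    set q : ℚ_[p][X] := g * C g.leadingCoeff⁻¹ with hq
    have hqm : q.Monic := monic_mul_leadingCoeff_inv hgne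
    have hassoc : Associated g q :=
      associated_mul_unit_right g _ (isUnit_C.mpr (inv_ne_zero hlcne).isUnit)
    have hqΦ : q ∣ Φ := hassoc.symm.dvd.trans (hg ▸ EuclideanDomain.gcd_dvd_right f Φ)
    have hqdeg : q.natDegree = g.natDegree := by
      rw [hq, natDegree_mul hgne (by simpa using (inv_ne_zero hlcne)), natDegree_C, add_zero]
    have hgdegle : g.natDegree ≤ 2 := by
      have := Polynomial.natDegree_le_of_dvd (EuclideanDomain.gcd_dvd_left f Φ) hfne0
      rw [← hg] at this
      omega
    have hgdegpos : 1 ≤ g.natDegree := by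
      by_contra h0
      apply hgu
      have : g.natDegree = 0 := by omega
      rw [eq_C_of_natDegree_eq_zero this]
      refine isUnit_C.mpr ?_
      refine (show g.coeff 0 ≠ 0 from ?_).isUnit
      intro h1
      exact hgne (by rw [eq_C_of_natDegree_eq_zero this, h1, map_zero])
    exact aux_no_small_factor p hp4 q hqm (by omega) (by omega) hqΦ
end

section
/- Let p be a prime, let U ⊆ GL₂(𝔽_p) be the subgroup of upper unitriangular matrices { [[1,b],[0,1]] : b ∈ 𝔽_p }, let V = 𝔽_p² with the natural U-action, and let L = V^U be the subspace of U-fixed vectors (the line spanned by the first standard basis vector). Then: (a) the connecting homomorphism δ : H⁰(U, V/L) → H¹(U, L) in the long exact cohomology sequence of 0 → L → V → V/L → 0 is an isomorphism, and (b) the induced map H¹(U, V) → H¹(U, V/L) is injective. -/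
/-- The subgroup `U = { [[1,b],[0,1]] : b ∈ 𝔽_p } ⊆ GL₂(𝔽_p)` of upper unitriangular
matrices. -/
def uniSub (p : ℕ) [Fact p.Prime] : Subgroup (GL (Fin 2) (ZMod p)) where
  carrier := {u | ((u : Matrix (Fin 2) (Fin 2) (ZMod p)) 0 0 = 1 ∧
    (u : Matrix (Fin 2) (Fin 2) (ZMod p)) 1 1 = 1 ∧
    (u : Matrix (Fin 2) (Fin 2) (ZMod p)) 1 0 = 0)}
  one_mem' := by
    refine ⟨?_, ?_, ?_⟩ <;> simp [Matrix.one_apply]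
  mul_mem' := by
    rintro a b ⟨ha00, ha11, ha10⟩ ⟨hb00, hb11, hb10⟩
    refine ⟨?_, ?_, ?_⟩ <;>
      simp [Units.val_mul, Matrix.mul_apply, Fin.sum_univ_two, ha00, ha11, ha10,
        hb00, hb11, hb10]
  inv_mem' := by
    rintro a ⟨ha00, ha11, ha10⟩
    have hmi : ((a : Matrix (Fin 2) (Fin 2) (ZMod p)) *
        ((a⁻¹ : GL (Fin 2) (ZMod p)) : Matrix (Fin 2) (Fin 2) (ZMod p))) = 1 := a.mul_inv
    have him : (((a⁻¹ : GL (Fin 2) (ZMod p)) : Matrix (Fin 2) (Fin 2) (ZMod p)) *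
        (a : Matrix (Fin 2) (Fin 2) (ZMod p))) = 1 := a.inv_mul
    refine ⟨?_, ?_, ?_⟩
    · have h := congrFun (congrFun him 0) 0
      simpa [Matrix.mul_apply, Fin.sum_univ_two, ha00, ha10, Matrix.one_apply] using h
    · have h := congrFun (congrFun hmi 1) 1
      simpa [Matrix.mul_apply, Fin.sum_univ_two, ha11, ha10, Matrix.one_apply] using h
    · have h := congrFun (congrFun hmi 1) 0
      simpa [Matrix.mul_apply, Fin.sum_univ_two, ha11, ha10, Matrix.one_apply] using h

/-- The natural action of an element `u` of `U` on `V = 𝔽_p²`. -/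
def uAct (p : ℕ) [Fact p.Prime] (u : uniSub p) (v : Fin 2 → ZMod p) : Fin 2 → ZMod p :=
  Matrix.mulVec (((u : GL (Fin 2) (ZMod p)) : Matrix (Fin 2) (Fin 2) (ZMod p))) v

/-- The subspace `L = V^U` of `U`-fixed vectors of `V = 𝔽_p²` (the line spanned by the first
standard basis vector). -/
def fixedL (p : ℕ) [Fact p.Prime] : Submodule (ZMod p) (Fin 2 → ZMod p) where
  carrier := {v | ∀ u : uniSub p, uAct p u v = v}
  add_mem' := by
    intro a b ha hb u
    simp only [uAct] at *
    rw [Matrix.mulVec_add, ha u, hb u]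
  zero_mem' := by
    intro u
    simp [uAct, Matrix.mulVec_zero]
  smul_mem' := by
    intro c a ha u
    simp only [uAct] at *
    rw [Matrix.mulVec_smul, ha u]

namespace Stmt14

variable (p : ℕ) [Fact p.Prime]

def uEltM (b : ZMod p) : Matrix (Fin 2) (Fin 2) (ZMod p) := !![1, b; 0, 1]

lemma uEltM_mul (b c : ZMod p) : uEltM p b * uEltM p c = uEltM p (b + c) := by
  ext i j
  fin_cases i <;> fin_cases j <;>
    simp [uEltM, Matrix.mul_apply, Fin.sum_univ_two, add_comm]

def uElt (b : ZMod p) : uniSub p :=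
  ⟨⟨uEltM p b, uEltM p (-b), by rw [uEltM_mul]; simp [uEltM, Matrix.one_fin_two],
    by rw [uEltM_mul]; simp [uEltM, Matrix.one_fin_two]⟩,
    by refine ⟨?_, ?_, ?_⟩ <;> simp [uEltM]⟩

@[simp] lemma uElt_val (b : ZMod p) :
    ((uElt p b : GL (Fin 2) (ZMod p)) : Matrix (Fin 2) (Fin 2) (ZMod p)) = uEltM p b := rfl

lemma uElt_mul (b c : ZMod p) : uElt p b * uElt p c = uElt p (b + c) := by
  apply Subtype.ext
  apply Units.ext
  simpa [Units.val_mul] using uEltM_mul p b c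

lemma uElt_zero : uElt p 0 = 1 := by
  apply Subtype.ext
  apply Units.ext
  simp [uElt, uEltM, Matrix.one_fin_two]

lemma eq_uElt (u : uniSub p) :
    u = uElt p (((u : GL (Fin 2) (ZMod p)) : Matrix (Fin 2) (Fin 2) (ZMod p)) 0 1) := by
  obtain ⟨h00, h11, h10⟩ := u.2
  apply Subtype.ext
  apply Units.ext
  ext i j
  fin_cases i <;> fin_cases j <;> simp [uEltM, h00, h11, h10]

lemma uAct_apply (u : uniSub p) (v : Fin 2 → ZMod p) :
    uAct p u v =
      ![v 0 + ((u : GL (Fin 2) (ZMod p)) : Matrix (Fin 2) (Fin 2) (ZMod p)) 0 1 * v 1, v 1] := by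
  obtain ⟨h00, h11, h10⟩ := u.2
  funext i
  fin_cases i <;>
    simp [uAct, Matrix.mulVec, dotProduct, Fin.sum_univ_two, h00, h11, h10]

lemma uAct_one (v : Fin 2 → ZMod p) : uAct p 1 v = v := by
  simp [uAct, Matrix.one_mulVec]

lemma mem_fixedL_iff (v : Fin 2 → ZMod p) : v ∈ fixedL p ↔ v 1 = 0 := by
  constructor
  · intro h
    have h1 := congrFun (h (uElt p 1)) 0
    rw [uAct_apply] at h1
    simpa [uEltM] using h1
  · intro h u
    rw [uAct_apply]
    funext i
    fin_cases i <;> simp [h]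

lemma cocycle_eq (f : uniSub p → (Fin 2 → ZMod p))
    (hL : ∀ u, f u ∈ fixedL p)
    (hf : ∀ u u' : uniSub p, f (u * u') = f u + uAct p u (f u')) (u : uniSub p) :
    f u = uAct p u ![0, f (uElt p 1) 0] - ![0, f (uElt p 1) 0] := by
  have hone : f 1 = 0 := by
    have h := hf 1 1
    rw [mul_one, uAct_one] at h
    exact (left_eq_add.mp h)
  have hfix : ∀ u u' : uniSub p, uAct p u' (f u) = f u := fun u u' => hL u u'
  have hnat : ∀ n : ℕ, f (uElt p (n : ZMod p)) = (n : ZMod p) • f (uElt p 1) := by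
    intro n
    induction n with
    | zero => simp [uElt_zero, hone]
    | succ n ih =>
        have h1 : uElt p ((n : ZMod p) + 1) = uElt p (n : ZMod p) * uElt p 1 := by
          rw [uElt_mul]
        push_cast
        rw [h1, hf, hfix (uElt p 1) _, ih, add_smul, one_smul]
  have key : ∀ b : ZMod p, f (uElt p b) = b • f (uElt p 1) := by
    intro b
    have hb : ((b.val : ℕ) : ZMod p) = b := by
      simp [ZMod.natCast_val, ZMod.cast_id]
    rw [← hb, hnat]
  have hc1 : f (uElt p 1) 1 = 0 := (mem_fixedL_iff p _).mp (hL _)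
  have hu : f u = (((u : GL (Fin 2) (ZMod p)) : Matrix (Fin 2) (Fin 2) (ZMod p)) 0 1) •
      f (uElt p 1) := by
    conv_lhs => rw [eq_uElt p u]
    rw [key]
  rw [uAct_apply]
  funext i
  fin_cases i <;> simp [hu, hc1]

end Stmt14

/-- Let `p` be a prime, `U ⊆ GL₂(𝔽_p)` the subgroup of upper unitriangular
matrices, `V = 𝔽_p²` with the natural `U`-action, and `L = V^U` the subspace of `U`-fixed
vectors.  Then, in the long exact cohomology sequence of `0 → L → V → V/L → 0`:
(a) the connecting homomorphism `δ : H⁰(U, V/L) → H¹(U, L)` is an isomorphism (it has trivial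
kernel and is surjective), and
(b) the induced map `H¹(U, V) → H¹(U, V/L)` is injective.
All cohomology classes are spelled out via inhomogeneous cocycles and coboundaries; classes of
`H⁰(U, V/L)` and `H¹(U, V/L)` are represented by elements, resp. maps, of `V` taken modulo
`L`. -/
theorem delta_H0_to_H1_iso_and_H1_injective (p : ℕ) [Fact p.Prime] :
    -- (a) `δ` has trivial kernel:
    ((∀ v : Fin 2 → ZMod p,
        (∀ u : uniSub p, uAct p u v - v ∈ fixedL p) →
        (∃ w ∈ fixedL p, ∀ u : uniSub p, uAct p u v - v = uAct p u w - w) →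
        v ∈ fixedL p) ∧
      -- (a) `δ` is surjective: every `1`-cocycle of `U` with values in `L` is, up to a
      -- coboundary with values in `L`, of the form `δ` of a `U`-invariant class in `V/L`:
      (∀ f : uniSub p → (Fin 2 → ZMod p),
        (∀ u : uniSub p, f u ∈ fixedL p) →
        (∀ u u' : uniSub p, f (u * u') = f u + uAct p u (f u')) →
        ∃ v : Fin 2 → ZMod p, (∀ u : uniSub p, uAct p u v - v ∈ fixedL p) ∧
          ∃ w ∈ fixedL p, ∀ u : uniSub p,
            f u = (uAct p u v - v) + (uAct p u w - w))) ∧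
    -- (b) `H¹(U, V) → H¹(U, V/L)` is injective:
    (∀ f : uniSub p → (Fin 2 → ZMod p),
      (∀ u u' : uniSub p, f (u * u') = f u + uAct p u (f u')) →
      (∃ v : Fin 2 → ZMod p, ∀ u : uniSub p, f u - (uAct p u v - v) ∈ fixedL p) →
      ∃ w : Fin 2 → ZMod p, ∀ u : uniSub p, f u = uAct p u w - w) := by
  refine ⟨⟨?_, ?_⟩, ?_⟩
  · -- (a) trivial kernel
    rintro v _ ⟨w, hw, hvw⟩ u
    have h := hvw u
    rw [hw u, sub_self] at h
    exact sub_eq_zero.mp h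
  · -- (a) surjectivity
    intro f hL hf
    refine ⟨![0, f (Stmt14.uElt p 1) 0], fun u => ?_, 0, (fixedL p).zero_mem, fun u => ?_⟩
    · rw [Stmt14.mem_fixedL_iff, Stmt14.uAct_apply]
      simp
    · have h0 : uAct p u 0 - 0 = (0 : Fin 2 → ZMod p) := by
        simp [uAct, Matrix.mulVec_zero]
      rw [h0, add_zero]
      exact Stmt14.cocycle_eq p f hL hf u
  · -- (b) injectivity
    rintro f hf ⟨v, hv⟩
    set g : uniSub p → (Fin 2 → ZMod p) := fun u => f u - (uAct p u v - v) with hg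
    have hgcoc : ∀ u u' : uniSub p, g (u * u') = g u + uAct p u (g u') := by
      intro u u'
      have hmul : uAct p (u * u') v = uAct p u (uAct p u' v) := by
        simp only [uAct, Matrix.mulVec_mulVec, Subgroup.coe_mul, Units.val_mul]
      have hsub : ∀ a b : Fin 2 → ZMod p, uAct p u (a - b) = uAct p u a - uAct p u b :=
        fun a b => by simp [uAct, Matrix.mulVec_sub]
      simp only [hg, hf u u', hmul, hsub]
      abel
    have hcob := Stmt14.cocycle_eq p g hv hgcoc
    refine ⟨v + ![0, g (Stmt14.uElt p 1) 0], fun u => ?_⟩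
    have hadd : ∀ a b : Fin 2 → ZMod p, uAct p u (a + b) = uAct p u a + uAct p u b :=
      fun a b => by simp [uAct, Matrix.mulVec_add]
    have hfu : f u = (uAct p u v - v) + g u := by simp [hg]
    rw [hfu, hcob u, hadd]
    abel
end
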